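/- For a path P in the Physarum network, the function W(P) = Σ_{e∈P} L_e ln D_e satisfies W(P)' = Δ(P) - L(P) + 2·Σ_{e∈P, Δ(e)<0} |Δ(e)|, where Δ(P) is the potential drop from the start to the end of P (edges oriented along P), Δ(e) is the potential drop on edge e, and L(P) = Σ_{e∈P} L_e. Consequently, if Δ(P)(t) ≥ Δ₀ for all sufficiently large t, then W(P)(t) ≥ C + (Δ₀ - L(P))·t for some constant C and all t. -/

import Mathlib

open Real Finset

/-- For a path `P` (with edges indexed by a finite type, edge `e` of length
`L e`, potential drop `Δ e` and flow `Q_e = D_e·Δ_e/L_e`), the function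
`W(P) = Σ_{e∈P} L_e·ln D_e` satisfies
`W(P)' = Δ(P) - L(P) + 2·Σ_{Δ(e)<0} |Δ(e)|` where `Δ(P) = Σ_e Δ(e)` and
`L(P) = Σ_e L_e`.  Consequently, if `Δ(P)(t) ≥ Δ₀` for all `t ≥ t₀`, then
`W(P)(t) ≥ C + (Δ₀ - L(P))·t` for some constant `C` and all `t ≥ 0`. -/
theorem path_log_weight_derivative {E : Type*} [Fintype E]
    (L : E → ℝ) (hL : ∀ e, 0 < L e)
    (D : ℝ → E → ℝ) (Δ : ℝ → E → ℝ)
    (hpos : ∀ t e, 0 < D t e)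
    (hdyn : ∀ t e, HasDerivAt (fun s => D s e)
      (|D t e * Δ t e / L e| - D t e) t) :
    (∀ t, HasDerivAt (fun s => ∑ e, L e * log (D s e))
      ((∑ e, Δ t e) - (∑ e, L e) +
        2 * ∑ e ∈ univ.filter (fun e => Δ t e < 0), |Δ t e|) t) ∧
    ∀ Δ₀ t₀ : ℝ, (∀ t, t₀ ≤ t → Δ₀ ≤ ∑ e, Δ t e) →
      ∃ c : ℝ, ∀ t, 0 ≤ t →
        c + (Δ₀ - ∑ e, L e) * t ≤ ∑ e, L e * log (D t e) := by
  have key : ∀ t, (∑ e, (|Δ t e| - L e)) =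
      (∑ e, Δ t e) - (∑ e, L e) +
        2 * ∑ e ∈ univ.filter (fun e => Δ t e < 0), |Δ t e| := by
    intro t
    rw [Finset.sum_sub_distrib, Finset.sum_filter]
    have : ∀ e : E, |Δ t e| = Δ t e + 2 * (if Δ t e < 0 then |Δ t e| else 0) := by
      intro e
      split_ifs with h
      · rw [abs_of_neg h]; ring
      · rw [abs_of_nonneg (not_lt.mp h)]; ring
    rw [Finset.mul_sum, Finset.sum_congr rfl (fun e _ => this e),
      Finset.sum_add_distrib]
    ring
  have hW : ∀ t, HasDerivAt (fun s => ∑ e, L e * log (D s e))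
      ((∑ e, Δ t e) - (∑ e, L e) +
        2 * ∑ e ∈ univ.filter (fun e => Δ t e < 0), |Δ t e|) t := by
    intro t
    rw [← key t]
    apply HasDerivAt.fun_sum
    intro e _
    have h1 := ((hdyn t e).log (hpos t e).ne').const_mul (L e)
    refine h1.congr_deriv ?_
    have hD := hpos t e
    have hLe := hL e
    rw [abs_div, abs_mul, abs_of_pos hD, abs_of_pos hLe]
    field_simp
  refine ⟨hW, ?_⟩
  intro Δ₀ t₀ hΔ
  set S : ℝ := ∑ e, L e with hS
  set W : ℝ → ℝ := fun t => ∑ e, L e * log (D t e) with hWdef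
  set g : ℝ → ℝ := fun t => W t - (Δ₀ - S) * t with hgdef
  have hg : ∀ t, HasDerivAt g
      ((∑ e, Δ t e) - S + 2 * ∑ e ∈ univ.filter (fun e => Δ t e < 0), |Δ t e|
        - (Δ₀ - S)) t := by
    intro t
    exact (hW t).sub (((hasDerivAt_id t).const_mul (Δ₀ - S)).congr_deriv (mul_one _))
  have hgcont : Continuous g :=
    continuous_iff_continuousAt.mpr fun t => (hg t).continuousAt
  have hmono : MonotoneOn g (Set.Ici t₀) := by
    apply monotoneOn_of_deriv_nonneg (convex_Ici t₀) hgcont.continuousOn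
    · intro x _; exact (hg x).differentiableAt.differentiableWithinAt
    · intro x hx
      rw [interior_Ici] at hx
      rw [(hg x).deriv]
      have h1 := hΔ x (le_of_lt hx)
      have h2 : (0:ℝ) ≤ ∑ e ∈ univ.filter (fun e => Δ x e < 0), |Δ x e| :=
        Finset.sum_nonneg fun e _ => abs_nonneg _
      linarith
  set t₁ : ℝ := max t₀ 0 with ht₁
  obtain ⟨x, hx, hmin⟩ := isCompact_Icc.exists_isMinOn
    (Set.nonempty_Icc.mpr (le_max_right t₀ 0)) (hgcont.continuousOn (s := Set.Icc 0 t₁))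
  refine ⟨g x, fun t ht => ?_⟩
  have hgoal : g x ≤ g t := by
    rcases le_or_gt t t₁ with h | h
    · exact hmin ⟨ht, h⟩
    · have h1 : g t₁ ≤ g t := hmono (Set.mem_Ici.mpr (le_max_left t₀ 0))
        (Set.mem_Ici.mpr (le_trans (le_max_left t₀ 0) h.le)) h.le
      have h2 : g x ≤ g t₁ := hmin ⟨le_max_right t₀ 0, le_refl t₁⟩
      linarith
  simp only [hgdef, hWdef] at hgoal ⊢
  linarith
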